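/- Let N ≥ 3, let Γ₁,…,Γ_N be nonzero real numbers with Γ₁ + Γ₂ ≠ 0, and let Λ ∈ ℂ with |Λ| = 1 satisfy conj(Λ)/Λ = 1 + (∑_{j=3}^N Γ_j)·(1/Γ₁ + 1/Γ₂). Then Λ ∈ {1, −1, i, −i}. Moreover: (a) if Λ = 1 or Λ = −1, then ∑_{j=3}^N Γ_j = 0; (b) if Λ = i or Λ = −i and additionally ∑_{1≤j<k≤N} Γ_j·Γ_k = 0, then Γ₁·Γ₂ = ∑_{3≤j<k≤N} Γ_j·Γ_k. -/

import Mathlib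

open Finset

lemma sum_split (N : ℕ) (hN : 3 ≤ N) (Γ : Fin N → ℝ) :
    (∑ j : Fin N, ∑ k ∈ Finset.univ.filter (fun k => j < k), Γ j * Γ k) =
    Γ ⟨0, by linarith⟩ * Γ ⟨1, by linarith⟩ +
      (Γ ⟨0, by linarith⟩ + Γ ⟨1, by linarith⟩) *
        (∑ j ∈ Finset.univ.filter (fun j : Fin N => 2 ≤ (j : ℕ)), Γ j) +
      ∑ j : Fin N, ∑ k ∈ Finset.univ.filter (fun k => j < k ∧ 2 ≤ (j : ℕ)), Γ j * Γ k := by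
  have h01 : (Finset.univ.filter (fun j : Fin N => ¬ 2 ≤ (j : ℕ))) =
      {⟨0, by linarith⟩, ⟨1, by linarith⟩} := by
    ext j
    simp [Fin.ext_iff]
    omega
  have hf1 : (Finset.univ.filter (fun k : Fin N => (⟨1, by linarith⟩ : Fin N) < k)) =
      Finset.univ.filter (fun k : Fin N => 2 ≤ (k : ℕ)) := by
    ext k; simp [Fin.lt_def]; omega
  have hf0 : (Finset.univ.filter (fun k : Fin N => (⟨0, by linarith⟩ : Fin N) < k)) =
      insert (⟨1, by linarith⟩ : Fin N)
        (Finset.univ.filter (fun k : Fin N => 2 ≤ (k : ℕ))) := by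
    ext k; simp [Fin.lt_def, Fin.ext_iff]; omega
  rw [← Finset.sum_filter_add_sum_filter_not Finset.univ (fun j : Fin N => 2 ≤ (j : ℕ))
      (fun j => ∑ k ∈ Finset.univ.filter (fun k => j < k), Γ j * Γ k)]
  rw [← Finset.sum_filter_add_sum_filter_not Finset.univ (fun j : Fin N => 2 ≤ (j : ℕ))
      (fun j => ∑ k ∈ Finset.univ.filter (fun k => j < k ∧ 2 ≤ (j : ℕ)), Γ j * Γ k)]
  have e1 : ∀ j ∈ Finset.univ.filter (fun j : Fin N => 2 ≤ (j : ℕ)),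
      (∑ k ∈ Finset.univ.filter (fun k => j < k ∧ 2 ≤ (j : ℕ)), Γ j * Γ k) =
      ∑ k ∈ Finset.univ.filter (fun k => j < k), Γ j * Γ k := by
    intro j hj
    simp only [Finset.mem_filter] at hj
    congr 1
    ext k
    simp [hj.2]
  rw [Finset.sum_congr rfl e1, h01]
  have hne : (⟨0, by linarith⟩ : Fin N) ≠ ⟨1, by linarith⟩ := by simp [Fin.ext_iff]
  rw [Finset.sum_pair hne, Finset.sum_pair hne, hf0, hf1]
  have hnotmem : (⟨1, by linarith⟩ : Fin N) ∉
      Finset.univ.filter (fun k : Fin N => 2 ≤ (k : ℕ)) := by simp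
  rw [Finset.sum_insert hnotmem, ← Finset.mul_sum, ← Finset.mul_sum]
  have z0 : (Finset.univ.filter
      (fun k : Fin N => (⟨0, by linarith⟩ : Fin N) < k ∧ 2 ≤ (((⟨0, by linarith⟩ : Fin N)) : ℕ))) = ∅ := by
    simp
  have z1 : (Finset.univ.filter
      (fun k : Fin N => (⟨1, by linarith⟩ : Fin N) < k ∧ 2 ≤ (((⟨1, by linarith⟩ : Fin N)) : ℕ))) = ∅ := by
    simp
  rw [z0, z1]
  simp
  ring

theorem isolated_z_stroke
    (N : ℕ) (hN : 3 ≤ N) (Γ : Fin N → ℝ) (hΓ : ∀ i, Γ i ≠ 0)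
    (h12 : Γ ⟨0, by omega⟩ + Γ ⟨1, by omega⟩ ≠ 0)
    (Λ : ℂ) (hΛ : ‖Λ‖ = 1)
    (h : (starRingEnd ℂ) Λ / Λ =
      1 + (((∑ j ∈ Finset.univ.filter (fun j : Fin N => 2 ≤ (j : ℕ)), Γ j) *
        (1 / Γ ⟨0, by omega⟩ + 1 / Γ ⟨1, by omega⟩) : ℝ) : ℂ)) :
    (Λ = 1 ∨ Λ = -1 ∨ Λ = Complex.I ∨ Λ = -Complex.I) ∧
    ((Λ = 1 ∨ Λ = -1) →
      ∑ j ∈ Finset.univ.filter (fun j : Fin N => 2 ≤ (j : ℕ)), Γ j = 0) ∧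
    ((Λ = Complex.I ∨ Λ = -Complex.I) →
      (∑ j : Fin N, ∑ k ∈ Finset.univ.filter (fun k => j < k), Γ j * Γ k) = 0 →
      Γ ⟨0, by omega⟩ * Γ ⟨1, by omega⟩ =
        ∑ j : Fin N, ∑ k ∈ Finset.univ.filter (fun k => j < k ∧ 2 ≤ (j : ℕ)),
          Γ j * Γ k) := by
  have ha : Γ ⟨0, by omega⟩ ≠ 0 := hΓ _
  have hb : Γ ⟨1, by omega⟩ ≠ 0 := hΓ _
  set a : ℝ := Γ ⟨0, by omega⟩ with ha_def
  set b : ℝ := Γ ⟨1, by omega⟩ with hb_def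
  set S : ℝ := ∑ j ∈ Finset.univ.filter (fun j : Fin N => 2 ≤ (j : ℕ)), Γ j with hS_def
  set c : ℝ := S * (1 / a + 1 / b) with hc_def
  have hΛ0 : Λ ≠ 0 := by
    intro h0; rw [h0] at hΛ; simp at hΛ
  have habs : |1 + c| = 1 := by
    have := congrArg (‖·‖) h
    rw [norm_div, Complex.norm_conj, hΛ, div_self (by norm_num)] at this
    have h2 : ((1 + c : ℝ) : ℂ) = 1 + (c : ℂ) := by push_cast; ring
    rw [← h2, Complex.norm_real, Real.norm_eq_abs] at this
    exact this.symm
  have hkey : (starRingEnd ℂ) Λ = Λ * (1 + (c : ℂ)) := by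
    field_simp at h
    linear_combination h
  have hcases : c = 0 ∨ c = -2 := by
    rcases abs_eq (by norm_num : (0:ℝ) ≤ 1) |>.mp habs with h1 | h1
    · left; linarith
    · right; linarith
  have hsum1 : 1 / a + 1 / b ≠ 0 := by
    field_simp
    intro hq
    rw [div_eq_zero_iff] at hq
    rcases hq with hq | hq
    · exact h12 (by linarith)
    · exact mul_ne_zero ha hb hq
  have part1 : Λ = 1 ∨ Λ = -1 ∨ Λ = Complex.I ∨ Λ = -Complex.I := by
    rcases hcases with hc | hc
    · rw [hc] at hkey
      simp at hkey
      have him : Λ.im = 0 := Complex.conj_eq_iff_im.mp hkey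
      have hsq : Λ.re ^ 2 = 1 := by
        have := Complex.sq_norm Λ
        rw [hΛ, Complex.normSq_apply, him] at this
        nlinarith
      have hre : Λ.re = 1 ∨ Λ.re = -1 := by
        rcases mul_eq_zero.mp (show (Λ.re - 1) * (Λ.re + 1) = 0 by nlinarith) with h1 | h1
        · left; linarith
        · right; linarith
      rcases hre with h1 | h1
      · left; apply Complex.ext <;> simp [h1, him]
      · right; left; apply Complex.ext <;> simp [h1, him]
    · rw [hc] at hkey
      push_cast at hkey
      have hre : Λ.re = 0 := by
        have := congrArg Complex.re hkey
        simp at this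
        linarith
      have hsq : Λ.im ^ 2 = 1 := by
        have h2 := Complex.sq_norm Λ
        rw [hΛ, Complex.normSq_apply, hre] at h2
        nlinarith
      have him : Λ.im = 1 ∨ Λ.im = -1 := by
        rcases mul_eq_zero.mp (show (Λ.im - 1) * (Λ.im + 1) = 0 by nlinarith) with h1 | h1
        · left; linarith
        · right; linarith
      rcases him with h1 | h1
      · right; right; left; apply Complex.ext <;> simp [hre, h1]
      · right; right; right; apply Complex.ext <;> simp [hre, h1]
  refine ⟨part1, ?_, ?_⟩
  · intro h1
    have hval : (starRingEnd ℂ) Λ / Λ = 1 := by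
      rcases h1 with rfl | rfl <;> simp
    rw [hval] at h
    have hc0 : (c : ℂ) = 0 := by linear_combination -h
    have hc0' : c = 0 := by exact_mod_cast hc0
    rw [hc_def] at hc0'
    rcases mul_eq_zero.mp hc0' with h1 | h1
    · exact h1
    · exact absurd h1 hsum1
  · intro hI hL
    have hval : (starRingEnd ℂ) Λ / Λ = -1 := by
      rcases hI with rfl | rfl
      · rw [Complex.conj_I, div_eq_iff Complex.I_ne_zero]; ring
      · rw [map_neg, Complex.conj_I, div_eq_iff (neg_ne_zero.mpr Complex.I_ne_zero)]; ring
    rw [hval] at h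
    have hc2 : (c : ℂ) = -2 := by linear_combination -h
    have hc2' : c = -2 := by exact_mod_cast hc2
    rw [hc_def] at hc2'
    have hSab : S * (a + b) = -2 * (a * b) := by
      field_simp at hc2'
      linarith
    have hsplit := sum_split N hN Γ
    rw [← ha_def, ← hb_def, ← hS_def] at hsplit
    linear_combination hsplit - hL + hSab
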